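/- Smallness of the Miyadera–Voigt integral: for every q ∈ (0,1) there exists t₀ ∈ (0,r] such that for all d ∈ ℝⁿ and all measurable square-integrable η : [−r,0] → ℝⁿ, ∫₀^{t₀} ‖Φ( T_t d + T₀(t)η )‖ dt ≤ q · ( ‖d‖ + ‖η‖_{L²([−r,0];ℝⁿ)} ). -/

import Mathlib

open MeasureTheory Set

/-- `e^{sB}` as an operator on Euclidean space `ℝⁿ`, for `B = diag b`. -/
noncomputable def expB {n : ℕ} (b : Fin n → ℝ) (s : ℝ) :
    EuclideanSpace ℝ (Fin n) →L[ℝ] EuclideanSpace ℝ (Fin n) :=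
  Matrix.toEuclideanCLM (𝕜 := ℝ) (NormedSpace.exp (s • Matrix.diagonal b))

/-- The nilpotent left-shift operator: `(T₀(t)η)(θ) = η(t+θ)` if `t+θ ≤ 0`, else `0`. -/
noncomputable def shiftT0 {n : ℕ} (t : ℝ) (η : ℝ → EuclideanSpace ℝ (Fin n)) :
    ℝ → EuclideanSpace ℝ (Fin n) :=
  fun θ => if t + θ ≤ 0 then η (t + θ) else 0

/-- The boundary-delay flow: `(T_t d)(θ) = e^{(t+θ)B} d` if `-t < θ`, else `0`. -/
noncomputable def delayT {n : ℕ} (b : Fin n → ℝ) (t : ℝ) (d : EuclideanSpace ℝ (Fin n)) :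
    ℝ → EuclideanSpace ℝ (Fin n) :=
  fun θ => if -t < θ then expB b (t + θ) d else 0

/-- The delay operator `Φ(ξ) := ∫_{[-r,0]} ξ dμ⁺ - ∫_{[-r,0]} ξ dμ⁻`, where `(μ⁺, μ⁻)` is the
Jordan decomposition of a Borel measure `μ` of bounded variation on `[-r,0]`. -/
noncomputable def delayPhi {n : ℕ} (r : ℝ) (μp μm : Measure ℝ)
    (ξ : ℝ → EuclideanSpace ℝ (Fin n)) : EuclideanSpace ℝ (Fin n) :=
  (∫ θ in Icc (-r) 0, ξ θ ∂μp) - ∫ θ in Icc (-r) 0, ξ θ ∂μm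

lemma expB_apply {n : ℕ} (b : Fin n → ℝ) (s : ℝ) (d : EuclideanSpace ℝ (Fin n)) (i : Fin n) :
    expB b s d i = Real.exp (s * b i) * d i := by
  have h1 : (s • Matrix.diagonal b) = Matrix.diagonal (s • b) := by
    rw [Matrix.diagonal_smul]
  rw [expB, h1, Matrix.exp_diagonal]
  have h2 : (Matrix.toEuclideanCLM (𝕜 := ℝ)
      (Matrix.diagonal (NormedSpace.exp (s • b))) d) i
      = (Matrix.toLin' (Matrix.diagonal (NormedSpace.exp (s • b))) d) i := rfl
  rw [h2, Matrix.toLin'_apply, Matrix.mulVec_diagonal]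
  congr 1
  rw [Pi.coe_exp, Pi.smul_apply, smul_eq_mul, ← Real.exp_eq_exp_ℝ]

lemma expB_norm_le {n : ℕ} (b : Fin n → ℝ) {s r : ℝ} (hs : |s| ≤ r)
    (d : EuclideanSpace ℝ (Fin n)) :
    ‖expB b s d‖ ≤ Real.exp (r * ‖b‖) * ‖d‖ := by
  set c := Real.exp (r * ‖b‖) with hc
  have hc0 : 0 < c := Real.exp_pos _
  have hterm : ∀ i : Fin n, ‖expB b s d i‖ ^ 2 ≤ c ^ 2 * ‖d i‖ ^ 2 := by
    intro i
    rw [expB_apply]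
    have he : Real.exp (s * b i) ≤ c := by
      apply Real.exp_le_exp.2
      calc s * b i ≤ |s * b i| := le_abs_self _
        _ = |s| * |b i| := abs_mul _ _
        _ ≤ r * ‖b‖ := by
            apply mul_le_mul hs (norm_le_pi_norm b i) (abs_nonneg _)
            exact le_trans (abs_nonneg s) hs
    have he0 : (0:ℝ) ≤ Real.exp (s * b i) := (Real.exp_pos _).le
    have : ‖Real.exp (s * b i) * d i‖ = Real.exp (s * b i) * ‖d i‖ := by
      rw [norm_mul, Real.norm_eq_abs, abs_of_nonneg he0]
    rw [this, mul_pow]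
    have := norm_nonneg (d i)
    nlinarith [sq_nonneg (‖d i‖), mul_le_mul he he he0 hc0.le]
  rw [EuclideanSpace.norm_eq, EuclideanSpace.norm_eq]
  have hsum : ∑ i, ‖expB b s d i‖ ^ 2 ≤ c ^ 2 * ∑ i, ‖d i‖ ^ 2 := by
    rw [Finset.mul_sum]
    exact Finset.sum_le_sum fun i _ => hterm i
  calc Real.sqrt (∑ i, ‖expB b s d i‖ ^ 2) ≤ Real.sqrt (c ^ 2 * ∑ i, ‖d i‖ ^ 2) :=
        Real.sqrt_le_sqrt hsum
    _ = c * Real.sqrt (∑ i, ‖d i‖ ^ 2) := by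
        rw [Real.sqrt_mul (sq_nonneg c), Real.sqrt_sq hc0.le]

lemma shift_uncurry_meas {n : ℕ} {η : ℝ → EuclideanSpace ℝ (Fin n)} (hη : Measurable η) :
    Measurable (fun p : ℝ × ℝ => (‖shiftT0 p.1 η p.2‖₊ : ENNReal)) := by
  have h0 : Measurable (fun p : ℝ × ℝ => p.1 + p.2) := measurable_fst.add measurable_snd
  have : Measurable (fun p : ℝ × ℝ => shiftT0 p.1 η p.2) := by
    simp only [shiftT0]
    exact Measurable.ite (measurableSet_le h0 measurable_const) (hη.comp h0) measurable_const
  exact this.nnnorm.coe_nnreal_ennreal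

lemma Sν_meas {n : ℕ} (r : ℝ) {η : ℝ → EuclideanSpace ℝ (Fin n)} (hη : Measurable η)
    (ν : Measure ℝ) [SFinite ν] :
    Measurable (fun t : ℝ => ∫⁻ θ in Icc (-r) 0, (‖shiftT0 t η θ‖₊ : ENNReal) ∂ν) :=
  Measurable.lintegral_prod_right (shift_uncurry_meas hη)

lemma shift_inner_bound {n : ℕ} {r t₀ : ℝ} (hr : 0 < r)
    {η : ℝ → EuclideanSpace ℝ (Fin n)} (hη : Measurable η) {θ : ℝ} (hθ : θ ∈ Icc (-r) 0) :
    ∫⁻ t in Ioc 0 t₀, (‖shiftT0 t η θ‖₊ : ENNReal)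
      ≤ (∫⁻ u in Icc (-r) 0, (‖η u‖₊ : ENNReal) ^ 2) ^ (1/2 : ℝ)
        * (ENNReal.ofReal t₀) ^ (1/2 : ℝ) := by
  set f : ℝ → ENNReal := fun t => (‖shiftT0 t η θ‖₊ : ENNReal) with hf_def
  have hf : Measurable f := by
    have h0 : Measurable (fun t : ℝ => t + θ) := measurable_add_const θ
    have : Measurable (fun t : ℝ => shiftT0 t η θ) := by
      simp only [shiftT0]
      exact Measurable.ite (measurableSet_le h0 measurable_const) (hη.comp h0) measurable_const
    exact this.nnnorm.coe_nnreal_ennreal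
  have hpq : Real.HolderConjugate 2 2 := ⟨by norm_num, by norm_num, by norm_num⟩
  have hCS := ENNReal.lintegral_mul_le_Lp_mul_Lq (volume.restrict (Ioc 0 t₀)) hpq
    hf.aemeasurable aemeasurable_const (g := fun _ => 1)
  simp only [mul_one, Pi.mul_apply, ENNReal.one_rpow, lintegral_const,
    Measure.restrict_apply MeasurableSet.univ, univ_inter, one_mul] at hCS
  have hvol : volume (Ioc (0:ℝ) t₀) = ENNReal.ofReal t₀ := by
    rw [Real.volume_Ioc, sub_zero]
  rw [hvol] at hCS
  refine le_trans hCS (mul_le_mul_left (ENNReal.rpow_le_rpow ?_ (by norm_num)) _)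
  set G : ℝ → ENNReal := (Ioc (-r) 0).indicator (fun u => (‖η u‖₊ : ENNReal) ^ 2) with hG_def
  have hGmeas : Measurable G :=
    Measurable.indicator (hη.nnnorm.coe_nnreal_ennreal.pow measurable_const) measurableSet_Ioc
  have step1 : ∫⁻ t in Ioc 0 t₀, f t ^ (2:ℝ) ≤ ∫⁻ t in Ioc 0 t₀, G (t + θ) := by
    apply setLIntegral_mono (hGmeas.comp (measurable_add_const θ))
    intro t ht
    simp only [Function.comp_apply]
    have h2 : f t ^ (2:ℝ) = f t ^ (2:ℕ) := by
      rw [← ENNReal.rpow_natCast]; norm_num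
    rw [h2]
    simp only [hf_def, shiftT0]
    split_ifs with h
    · have hmem : t + θ ∈ Ioc (-r) 0 := ⟨by linarith [ht.1, hθ.1], h⟩
      rw [hG_def, indicator_of_mem hmem]
    · simp
  have step2 : ∫⁻ t in Ioc 0 t₀, G (t + θ) ≤ ∫⁻ t, G (t + θ) :=
    setLIntegral_le_lintegral _ _
  have step3 : ∫⁻ t, G (t + θ) = ∫⁻ u, G u := lintegral_add_right_eq_self G θ
  have step4 : ∫⁻ u, G u ≤ ∫⁻ u in Icc (-r) 0, (‖η u‖₊ : ENNReal) ^ 2 := by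
    rw [hG_def, lintegral_indicator measurableSet_Ioc]
    exact lintegral_mono_set Ioc_subset_Icc_self
  calc ∫⁻ t in Ioc 0 t₀, f t ^ (2:ℝ) ≤ ∫⁻ t in Ioc 0 t₀, G (t + θ) := step1
    _ ≤ ∫⁻ t, G (t + θ) := step2
    _ = ∫⁻ u, G u := step3
    _ ≤ _ := step4

lemma shift_bound {n : ℕ} {r t₀ : ℝ} (hr : 0 < r)
    {η : ℝ → EuclideanSpace ℝ (Fin n)} (hη : Measurable η)
    (ν : Measure ℝ) [SFinite ν] :
    ∫⁻ t in Ioc 0 t₀, (∫⁻ θ in Icc (-r) 0, (‖shiftT0 t η θ‖₊ : ENNReal) ∂ν) ∂volume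
      ≤ (∫⁻ u in Icc (-r) 0, (‖η u‖₊ : ENNReal) ^ 2) ^ (1/2 : ℝ)
        * (ENNReal.ofReal t₀) ^ (1/2 : ℝ) * ν (Icc (-r) 0) := by
  rw [lintegral_lintegral_swap ((shift_uncurry_meas hη).aemeasurable)]
  calc ∫⁻ θ in Icc (-r) 0, (∫⁻ t in Ioc 0 t₀, (‖shiftT0 t η θ‖₊ : ENNReal)) ∂ν
      ≤ ∫⁻ _ in Icc (-r) 0, ((∫⁻ u in Icc (-r) 0, (‖η u‖₊ : ENNReal) ^ 2) ^ (1/2 : ℝ)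
          * (ENNReal.ofReal t₀) ^ (1/2 : ℝ)) ∂ν :=
        setLIntegral_mono' measurableSet_Icc (fun θ hθ => shift_inner_bound hr hη hθ)
    _ = _ := by rw [setLIntegral_const]
set_option maxHeartbeats 1000000 in
/-- smallness of the Miyadera–Voigt integral.  For every `q ∈ (0,1)` there
exists `t₀ ∈ (0,r]` such that for all `d ∈ ℝⁿ` and all measurable square-integrable
`η : [-r,0] → ℝⁿ`,
`∫₀^{t₀} ‖Φ(T_t d + T₀(t)η)‖ dt ≤ q (‖d‖ + ‖η‖_{L²([-r,0];ℝⁿ)})`. -/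
theorem statement12
    (r : ℝ) (hr : 0 < r) (n : ℕ) (b : Fin n → ℝ)
    (μp μm : Measure ℝ) [IsFiniteMeasure μp] [IsFiniteMeasure μm]
    (q : ℝ) (hq0 : 0 < q) (hq1 : q < 1) :
    ∃ t₀ : ℝ, 0 < t₀ ∧ t₀ ≤ r ∧
      ∀ (d : EuclideanSpace ℝ (Fin n)) (η : ℝ → EuclideanSpace ℝ (Fin n)),
        Measurable η → IntegrableOn (fun s => ‖η s‖ ^ 2) (Icc (-r) 0) →
        ∫ t in (0:ℝ)..t₀, ‖delayPhi r μp μm (fun θ => delayT b t d θ + shiftT0 t η θ)‖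
          ≤ q * (‖d‖ + Real.sqrt (∫ s in Icc (-r) 0, ‖η s‖ ^ 2)) := by
  classical
  set I : Set ℝ := Icc (-r) 0 with hI
  set C : ℝ := Real.exp (r * ‖b‖) with hC
  have hC0 : 0 < C := Real.exp_pos _
  set M : ℝ := (μp I).toReal + (μm I).toReal with hM
  have hM0 : 0 ≤ M := by positivity
  set t₀ : ℝ := min r (min (q / (M * C + 1)) ((q / (M + 1)) ^ 2)) with ht₀def
  have ht₀pos : 0 < t₀ := by
    apply lt_min hr (lt_min (by positivity) (by positivity))
  have ht₀r : t₀ ≤ r := min_le_left _ _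
  have hkey1 : t₀ * (M * C) ≤ q := by
    have h : t₀ ≤ q / (M * C + 1) := le_trans (min_le_right _ _) (min_le_left _ _)
    have hMC : 0 ≤ M * C := by positivity
    calc t₀ * (M * C) ≤ (q / (M * C + 1)) * (M * C) := mul_le_mul_of_nonneg_right h hMC
      _ ≤ q := by
          rw [div_mul_eq_mul_div, div_le_iff₀ (by positivity)]
          nlinarith
  have hkey2 : Real.sqrt t₀ * M ≤ q := by
    have h : t₀ ≤ (q / (M + 1)) ^ 2 := le_trans (min_le_right _ _) (min_le_right _ _)
    have h2 : Real.sqrt t₀ ≤ q / (M + 1) := by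
      calc Real.sqrt t₀ ≤ Real.sqrt ((q / (M + 1)) ^ 2) := Real.sqrt_le_sqrt h
        _ = q / (M + 1) := Real.sqrt_sq (by positivity)
    calc Real.sqrt t₀ * M ≤ (q / (M + 1)) * M :=
          mul_le_mul_of_nonneg_right h2 hM0
      _ ≤ q := by
          rw [div_mul_eq_mul_div, div_le_iff₀ (by positivity)]
          nlinarith
  refine ⟨t₀, ht₀pos, ht₀r, ?_⟩
  intro d η hη hη2
  have hRHS0 : 0 ≤ q * (‖d‖ + Real.sqrt (∫ s in I, ‖η s‖ ^ 2)) := by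
    apply mul_nonneg hq0.le (add_nonneg (norm_nonneg _) (Real.sqrt_nonneg _))
  set F : ℝ → ℝ := fun t => ‖delayPhi r μp μm (fun θ => delayT b t d θ + shiftT0 t η θ)‖
    with hF_def
  rw [intervalIntegral.integral_of_le ht₀pos.le]
  by_cases hInt : IntegrableOn F (Ioc 0 t₀) volume
  swap
  · rw [integral_undef hInt]; exact hRHS0
  -- the ENNReal-valued L² norm of η
  set E : ENNReal := ∫⁻ u in I, (‖η u‖₊ : ENNReal) ^ 2 with hE_def
  have hE_ne : E ≠ ⊤ := by
    have h2 := hη2.2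
    rw [HasFiniteIntegral] at h2
    have : E = ∫⁻ u in I, (‖‖η u‖ ^ 2‖₊ : ENNReal) := by
      apply lintegral_congr
      intro u
      rw [← ENNReal.coe_pow]
      congr 1
      rw [← nnnorm_norm (η u), ← nnnorm_pow]
    rw [this]
    exact h2.ne
  have hEtoReal : ∫ s in I, ‖η s‖ ^ 2 = E.toReal := by
    rw [integral_eq_lintegral_of_nonneg_ae (Filter.Eventually.of_forall fun s => sq_nonneg _)
      hη2.aestronglyMeasurable]
    congr 1
    apply lintegral_congr
    intro u
    rw [ENNReal.ofReal_pow (norm_nonneg _), ofReal_norm, enorm_eq_nnnorm]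
  -- pointwise bound on the delay part
  have hdelay : ∀ t ∈ Ioc (0:ℝ) t₀, ∀ θ ∈ I, ‖delayT b t d θ‖ ≤ C * ‖d‖ := by
    intro t ht θ hθ
    simp only [delayT]
    split_ifs with h
    · apply expB_norm_le
      rw [abs_le]
      constructor
      · nlinarith [ht.1, hθ.1, hr]
      · linarith [hθ.2, ht.2, ht₀r]
    · simp only [norm_zero]; positivity
  -- θ-level bound for a finite measure ν
  have hθlevel : ∀ (ν : Measure ℝ), ∀ t ∈ Ioc (0:ℝ) t₀,
      (∫⁻ θ in I, (‖delayT b t d θ + shiftT0 t η θ‖₊ : ENNReal) ∂ν)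
        ≤ ENNReal.ofReal (C * ‖d‖) * ν I
          + ∫⁻ θ in I, (‖shiftT0 t η θ‖₊ : ENNReal) ∂ν := by
    intro ν t ht
    have hmono : ∫⁻ θ in I, (‖delayT b t d θ + shiftT0 t η θ‖₊ : ENNReal) ∂ν
        ≤ ∫⁻ θ in I, (ENNReal.ofReal (C * ‖d‖) + (‖shiftT0 t η θ‖₊ : ENNReal)) ∂ν := by
      apply setLIntegral_mono' measurableSet_Icc
      intro θ hθ
      have h1 : (‖delayT b t d θ + shiftT0 t η θ‖₊ : ENNReal)
          ≤ (‖delayT b t d θ‖₊ : ENNReal) + (‖shiftT0 t η θ‖₊ : ENNReal) := by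
        exact_mod_cast nnnorm_add_le _ _
      refine h1.trans (add_le_add_left ?_ _)
      calc (‖delayT b t d θ‖₊ : ENNReal) = ENNReal.ofReal ‖delayT b t d θ‖ :=
            (ofReal_norm _).symm
        _ ≤ _ := ENNReal.ofReal_le_ofReal (hdelay t ht θ hθ)
    rwa [lintegral_add_left measurable_const, setLIntegral_const] at hmono
  -- pointwise bound on the full integrand
  set Sp : ℝ → ENNReal := fun t => ∫⁻ θ in I, (‖shiftT0 t η θ‖₊ : ENNReal) ∂μp with hSp_def
  set Sm : ℝ → ENNReal := fun t => ∫⁻ θ in I, (‖shiftT0 t η θ‖₊ : ENNReal) ∂μm with hSm_def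
  set K0 : ENNReal := ENNReal.ofReal (C * ‖d‖) * μp I + ENNReal.ofReal (C * ‖d‖) * μm I
    with hK0_def
  have hΦ : ∀ t ∈ Ioc (0:ℝ) t₀, ENNReal.ofReal (F t) ≤ K0 + (Sp t + Sm t) := by
    intro t ht
    have h0 : ENNReal.ofReal (F t)
        = (‖delayPhi r μp μm (fun θ => delayT b t d θ + shiftT0 t η θ)‖₊ : ENNReal) :=
      ofReal_norm _
    rw [h0, delayPhi]
    have htri : (‖(∫ θ in I, (delayT b t d θ + shiftT0 t η θ) ∂μp)
          - ∫ θ in I, (delayT b t d θ + shiftT0 t η θ) ∂μm‖₊ : ENNReal)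
        ≤ (‖∫ θ in I, (delayT b t d θ + shiftT0 t η θ) ∂μp‖₊ : ENNReal)
          + (‖∫ θ in I, (delayT b t d θ + shiftT0 t η θ) ∂μm‖₊ : ENNReal) := by
      exact_mod_cast nnnorm_sub_le _ _
    refine htri.trans ?_
    have hp := (enorm_integral_le_lintegral_enorm (μ := μp.restrict I)
      (fun θ => delayT b t d θ + shiftT0 t η θ)).trans (hθlevel μp t ht)
    have hm := (enorm_integral_le_lintegral_enorm (μ := μm.restrict I)
      (fun θ => delayT b t d θ + shiftT0 t η θ)).trans (hθlevel μm t ht)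
    calc _ ≤ (ENNReal.ofReal (C * ‖d‖) * μp I + Sp t)
          + (ENNReal.ofReal (C * ‖d‖) * μm I + Sm t) := add_le_add hp hm
      _ = K0 + (Sp t + Sm t) := by rw [hK0_def]; ring
  -- integrate the bound in t
  set W : ENNReal := E ^ (1/2 : ℝ) * (ENNReal.ofReal t₀) ^ (1/2 : ℝ) with hW_def
  have hmain : ∫⁻ t in Ioc (0:ℝ) t₀, ENNReal.ofReal (F t)
      ≤ K0 * ENNReal.ofReal t₀ + (W * μp I + W * μm I) := by
    have hSpm : Measurable Sp := Sν_meas r hη μp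
    have hSmm : Measurable Sm := Sν_meas r hη μm
    calc ∫⁻ t in Ioc (0:ℝ) t₀, ENNReal.ofReal (F t)
        ≤ ∫⁻ t in Ioc (0:ℝ) t₀, (K0 + (Sp t + Sm t)) :=
          setLIntegral_mono (measurable_const.add (hSpm.add hSmm)) hΦ
      _ = K0 * ENNReal.ofReal t₀ + (∫⁻ t in Ioc (0:ℝ) t₀, (Sp t + Sm t)) := by
          rw [lintegral_add_left measurable_const, setLIntegral_const, Real.volume_Ioc,
            sub_zero]
      _ = K0 * ENNReal.ofReal t₀
            + ((∫⁻ t in Ioc (0:ℝ) t₀, Sp t) + ∫⁻ t in Ioc (0:ℝ) t₀, Sm t) := by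
          rw [lintegral_add_left hSpm]
      _ ≤ K0 * ENNReal.ofReal t₀ + (W * μp I + W * μm I) := by
          gcongr
          · exact shift_bound hr hη μp
          · exact shift_bound hr hη μm
  -- pass to real numbers
  set Z : ENNReal := K0 * ENNReal.ofReal t₀ + (W * μp I + W * μm I) with hZ_def
  have hZ_ne : Z ≠ ⊤ := by
    have hW_ne : W ≠ ⊤ := by
      apply ENNReal.mul_ne_top
      · exact ENNReal.rpow_ne_top_of_nonneg (by norm_num) hE_ne
      · exact ENNReal.rpow_ne_top_of_nonneg (by norm_num) ENNReal.ofReal_ne_top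
    apply ENNReal.add_ne_top.2
    constructor
    · exact ENNReal.mul_ne_top (ENNReal.add_ne_top.2
        ⟨ENNReal.mul_ne_top ENNReal.ofReal_ne_top (measure_ne_top _ _),
          ENNReal.mul_ne_top ENNReal.ofReal_ne_top (measure_ne_top _ _)⟩)
        ENNReal.ofReal_ne_top
    · exact ENNReal.add_ne_top.2
        ⟨ENNReal.mul_ne_top hW_ne (measure_ne_top _ _),
          ENNReal.mul_ne_top hW_ne (measure_ne_top _ _)⟩
  have hL : ∫ t in Ioc (0:ℝ) t₀, F t ≤ Z.toReal := by
    rw [integral_eq_lintegral_of_nonneg_ae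
      (Filter.Eventually.of_forall fun t => norm_nonneg _) hInt.aestronglyMeasurable]
    exact ENNReal.toReal_mono hZ_ne hmain
  refine hL.trans ?_
  -- compute Z.toReal
  have hWtoReal : W.toReal = Real.sqrt (∫ s in I, ‖η s‖ ^ 2) * Real.sqrt t₀ := by
    rw [hW_def, ENNReal.toReal_mul, ← ENNReal.toReal_rpow, ← ENNReal.toReal_rpow,
      ENNReal.toReal_ofReal ht₀pos.le, hEtoReal,
      ← Real.sqrt_eq_rpow, ← Real.sqrt_eq_rpow]
  have hK0toReal : K0.toReal = C * ‖d‖ * M := by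
    rw [hK0_def, ENNReal.toReal_add
        (ENNReal.mul_ne_top ENNReal.ofReal_ne_top (measure_ne_top _ _))
        (ENNReal.mul_ne_top ENNReal.ofReal_ne_top (measure_ne_top _ _)),
      ENNReal.toReal_mul, ENNReal.toReal_mul, ENNReal.toReal_ofReal (by positivity), hM]
    ring
  have hW_ne : W ≠ ⊤ := by
    apply ENNReal.mul_ne_top
    · exact ENNReal.rpow_ne_top_of_nonneg (by norm_num) hE_ne
    · exact ENNReal.rpow_ne_top_of_nonneg (by norm_num) ENNReal.ofReal_ne_top
  have hK0_ne : K0 ≠ ⊤ := by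
    rw [hK0_def]
    exact ENNReal.add_ne_top.2
      ⟨ENNReal.mul_ne_top ENNReal.ofReal_ne_top (measure_ne_top _ _),
        ENNReal.mul_ne_top ENNReal.ofReal_ne_top (measure_ne_top _ _)⟩
  have e1 : (K0 * ENNReal.ofReal t₀).toReal = K0.toReal * t₀ := by
    rw [ENNReal.toReal_mul, ENNReal.toReal_ofReal ht₀pos.le]
  have e2 : (W * μp I).toReal = W.toReal * (μp I).toReal := ENNReal.toReal_mul
  have e3 : (W * μm I).toReal = W.toReal * (μm I).toReal := ENNReal.toReal_mul
  have e4 : Z.toReal = (K0 * ENNReal.ofReal t₀).toReal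
      + ((W * μp I).toReal + (W * μm I).toReal) := by
    rw [hZ_def, ENNReal.toReal_add (ENNReal.mul_ne_top hK0_ne ENNReal.ofReal_ne_top)
        (ENNReal.add_ne_top.2 ⟨ENNReal.mul_ne_top hW_ne (measure_ne_top _ _),
          ENNReal.mul_ne_top hW_ne (measure_ne_top _ _)⟩),
      ENNReal.toReal_add (ENNReal.mul_ne_top hW_ne (measure_ne_top _ _))
        (ENNReal.mul_ne_top hW_ne (measure_ne_top _ _))]
  have hZtoReal : Z.toReal
      = C * ‖d‖ * M * t₀ + Real.sqrt (∫ s in I, ‖η s‖ ^ 2) * Real.sqrt t₀ * M := by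
    rw [e4, e1, e2, e3, hK0toReal, hWtoReal, hM]
    ring
  rw [hZtoReal]
  have hs0 : 0 ≤ Real.sqrt (∫ s in I, ‖η s‖ ^ 2) := Real.sqrt_nonneg _
  have h1 : C * ‖d‖ * M * t₀ ≤ q * ‖d‖ := by
    have := mul_le_mul_of_nonneg_right hkey1 (norm_nonneg d)
    nlinarith
  have h2 : Real.sqrt (∫ s in I, ‖η s‖ ^ 2) * Real.sqrt t₀ * M
      ≤ q * Real.sqrt (∫ s in I, ‖η s‖ ^ 2) := by
    have := mul_le_mul_of_nonneg_right hkey2 hs0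
    nlinarith
  nlinarith
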